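/- Let φ, dφ : ℂ → ℂ be bounded measurable functions. Then the difference quotient (T∘(φ + ε dφ) − T∘φ)/ε converges to the pointwise Fréchet derivative T'_{φ(z)}(dφ(z)) uniformly in z ∈ ℂ as ε → 0, i.e., ‖(T(φ + ε dφ) − T(φ))/ε − T'_φ(dφ)‖_∞ → 0. -/

import Mathlib

noncomputable def T : ℂ → ℂ := fun z => z / (1 + ‖z‖)


lemma T_key (z u : ℂ) : ‖T (z + u) - T z - u‖ ≤ ‖z‖ * ‖u‖ + ‖u‖ * (‖z‖ + ‖u‖) * (1 + ‖z‖) := by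
  have hA : ((1 + ‖z‖ : ℝ) : ℂ) ≠ 0 :=
    Complex.ofReal_ne_zero.mpr (by positivity)
  have hB : ((1 + ‖z + u‖ : ℝ) : ℂ) ≠ 0 :=
    Complex.ofReal_ne_zero.mpr (by positivity)
  have key : T (z + u) - T z - u =
      (z * ((‖z‖ : ℂ) - (‖z + u‖ : ℂ))
        - u * (‖z + u‖ : ℂ) * ((1 + ‖z‖ : ℝ) : ℂ))
        / (((1 + ‖z‖ : ℝ) : ℂ) * ((1 + ‖z + u‖ : ℝ) : ℂ)) := by
    simp only [T]
    push_cast at hA hB ⊢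
    field_simp
    ring
  rw [key, norm_div]
  have hden : (1:ℝ) ≤ ‖((1 + ‖z‖ : ℝ) : ℂ) * ((1 + ‖z + u‖ : ℝ) : ℂ)‖ := by
    rw [norm_mul, Complex.norm_real, Complex.norm_real, Real.norm_of_nonneg (by positivity),
      Real.norm_of_nonneg (by positivity)]
    nlinarith [norm_nonneg z, norm_nonneg (z + u)]
  have h1 : ‖(‖z‖ : ℂ) - (‖z + u‖ : ℂ)‖ ≤ ‖u‖ := by
    rw [← Complex.ofReal_sub, Complex.norm_real, Real.norm_eq_abs]
    calc |‖z‖ - ‖z + u‖| ≤ ‖z - (z + u)‖ := by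
          exact abs_norm_sub_norm_le z (z + u)
      _ = ‖u‖ := by rw [show z - (z + u) = -u by ring, norm_neg]
  have h2 : ‖(‖z + u‖ : ℂ)‖ ≤ ‖z‖ + ‖u‖ := by
    rw [Complex.norm_real, Real.norm_of_nonneg (norm_nonneg _)]
    exact norm_add_le z u
  have h3 : ‖((1 + ‖z‖ : ℝ) : ℂ)‖ = 1 + ‖z‖ := by
    rw [Complex.norm_real, Real.norm_of_nonneg (by positivity)]
  have hnum : ‖z * ((‖z‖ : ℂ) - (‖z + u‖ : ℂ))
        - u * (‖z + u‖ : ℂ) * ((1 + ‖z‖ : ℝ) : ℂ)‖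
      ≤ ‖z‖ * ‖u‖ + ‖u‖ * (‖z‖ + ‖u‖) * (1 + ‖z‖) := by
    calc _ ≤ ‖z * ((‖z‖ : ℂ) - (‖z + u‖ : ℂ))‖
          + ‖u * (‖z + u‖ : ℂ) * ((1 + ‖z‖ : ℝ) : ℂ)‖ := norm_sub_le _ _
      _ ≤ ‖z‖ * ‖u‖ + ‖u‖ * (‖z‖ + ‖u‖) * (1 + ‖z‖) := by
          rw [norm_mul, norm_mul, norm_mul, h3]
          have hz1 : (0:ℝ) ≤ 1 + ‖z‖ := by positivity
          gcongr
  calc ‖z * ((‖z‖ : ℂ) - (‖z + u‖ : ℂ))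
        - u * (‖z + u‖ : ℂ) * ((1 + ‖z‖ : ℝ) : ℂ)‖
      / ‖((1 + ‖z‖ : ℝ) : ℂ) * ((1 + ‖z + u‖ : ℝ) : ℂ)‖
      ≤ ‖z * ((‖z‖ : ℂ) - (‖z + u‖ : ℂ))
        - u * (‖z + u‖ : ℂ) * ((1 + ‖z‖ : ℝ) : ℂ)‖ :=
        div_le_self (norm_nonneg _) hden
    _ ≤ ‖z‖ * ‖u‖ + ‖u‖ * (‖z‖ + ‖u‖) * (1 + ‖z‖) := hnum


lemma D_sub_id_bound (D : ℂ → ℂ →L[ℝ] ℂ) (hD : ∀ z : ℂ, HasFDerivAt T (D z) z) (z : ℂ) :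
    ‖D z - ContinuousLinearMap.id ℝ ℂ‖ ≤ ‖z‖ * (2 + ‖z‖) := by
  refine ContinuousLinearMap.opNorm_le_bound _ (by positivity) fun w => ?_
  simp only [ContinuousLinearMap.coe_sub', Pi.sub_apply, ContinuousLinearMap.coe_id', id_eq]
  -- the directional derivative
  have hu : HasDerivAt (fun t : ℝ => z + t • w) w 0 := by
    simpa using ((hasDerivAt_id (0:ℝ)).smul_const w).const_add z
  have hg : HasDerivAt (fun t : ℝ => T (z + t • w)) (D z w) 0 := by
    have := (show HasFDerivAt T (D z) ((fun t : ℝ => z + t • w) 0) by simpa using hD z).comp_hasDerivAt 0 hu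
    exact this
  have hslope := hasDerivAt_iff_tendsto_slope.mp hg
  set c : ℝ → ℝ := fun t => ‖z‖ * ‖w‖ + ‖w‖ * (‖z‖ + |t| * ‖w‖) * (1 + ‖z‖) with hc
  have hcont : Filter.Tendsto c (nhdsWithin 0 {(0:ℝ)}ᶜ) (nhds (c 0)) := by
    refine (Continuous.continuousAt ?_).mono_left nhdsWithin_le_nhds
    fun_prop
  have hlim : Filter.Tendsto (fun t => ‖slope (fun t : ℝ => T (z + t • w)) 0 t - w‖)
      (nhdsWithin 0 {(0:ℝ)}ᶜ) (nhds ‖D z w - w‖) := (hslope.sub_const w).norm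
  have hev : ∀ᶠ t in nhdsWithin 0 {(0:ℝ)}ᶜ,
      ‖slope (fun t : ℝ => T (z + t • w)) 0 t - w‖ ≤ c t := by
    filter_upwards [self_mem_nhdsWithin] with t ht
    have ht0 : (t:ℝ) ≠ 0 := ht
    have hsl : slope (fun t : ℝ => T (z + t • w)) 0 t - w
        = (t : ℝ)⁻¹ • (T (z + t • w) - T (z + (0:ℝ) • w) - t • w) := by
      simp only [slope, vsub_eq_sub, sub_zero, zero_smul, add_zero]
      rw [smul_sub, smul_sub, smul_smul, inv_mul_cancel₀ ht0, one_smul, smul_sub]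
    rw [hsl]
    rw [norm_smul, Real.norm_eq_abs, abs_inv]
    have hb := T_key z ((t:ℝ) • w)
    simp only [zero_smul, add_zero] at hb ⊢
    have hn : ‖(t:ℝ) • w‖ = |t| * ‖w‖ := by rw [norm_smul, Real.norm_eq_abs]
    rw [hn] at hb
    calc |t|⁻¹ * ‖T (z + t • w) - T z - t • w‖
        ≤ |t|⁻¹ * (‖z‖ * (|t| * ‖w‖) + |t| * ‖w‖ * (‖z‖ + |t| * ‖w‖) * (1 + ‖z‖)) := by
          gcongr
      _ = c t := by
          rw [hc]
          have : |t| ≠ 0 := abs_ne_zero.mpr ht0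
          field_simp
  have := le_of_tendsto_of_tendsto hlim hcont hev
  calc ‖D z w - w‖ ≤ c 0 := this
    _ = ‖z‖ * (2 + ‖z‖) * ‖w‖ := by rw [hc]; simp; ring


lemma T_contDiffAt {z : ℂ} (hz : z ≠ 0) : ContDiffAt ℝ 2 T z := by
  have h1 : ContDiffAt ℝ 2 (fun y : ℂ => ‖y‖) z := contDiffAt_norm ℝ hz
  have h2 : ContDiffAt ℝ 2 (fun y : ℂ => ((‖y‖ : ℝ) : ℂ)) z :=
    Complex.ofRealCLM.contDiff.contDiffAt.comp z h1
  have h3 : ContDiffAt ℝ 2 (fun y : ℂ => (1:ℂ) + ((‖y‖ : ℝ) : ℂ)) z := contDiffAt_const.add h2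
  have hne : (1:ℂ) + ((‖z‖ : ℝ) : ℂ) ≠ 0 := by
    intro h
    have h' := congrArg Complex.re h
    simp at h'
    have := norm_nonneg z
    linarith
  have h4 : ContDiffAt ℝ 2 (fun y : ℂ => y * ((1:ℂ) + ((‖y‖ : ℝ) : ℂ))⁻¹) z :=
    contDiffAt_id.mul (h3.inv hne)
  have h4' : ContDiffAt ℝ 2 (fun y : ℂ => y / ((1:ℂ) + ((‖y‖ : ℝ) : ℂ))) z := by
    simpa only [div_eq_mul_inv] using h4
  exact h4'

lemma D_continuous (D : ℂ → ℂ →L[ℝ] ℂ) (hD : ∀ z : ℂ, HasFDerivAt T (D z) z) :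
    Continuous D := by
  have hDf : D = fderiv ℝ T := funext fun z => ((hD z).fderiv).symm
  rw [continuous_iff_continuousAt]
  intro z
  rcases eq_or_ne z 0 with rfl | hz
  · have hD0 : D 0 = ContinuousLinearMap.id ℝ ℂ := by
      have := D_sub_id_bound D hD 0
      simp only [norm_zero, zero_mul] at this
      rwa [norm_le_zero_iff, sub_eq_zero] at this
    rw [ContinuousAt, tendsto_iff_norm_sub_tendsto_zero]
    refine squeeze_zero (g := fun t : ℂ => ‖t‖ * (2 + ‖t‖)) (fun t => norm_nonneg _)
      (fun t => by rw [hD0]; exact D_sub_id_bound D hD t) ?_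
    have h : Filter.Tendsto (fun t : ℂ => ‖t‖ * (2 + ‖t‖)) (nhds 0)
        (nhds (‖(0:ℂ)‖ * (2 + ‖(0:ℂ)‖))) :=
      (continuous_norm.mul (continuous_const.add continuous_norm)).tendsto 0
    simpa using h
  · have h2 : ContDiffAt ℝ 1 (fderiv ℝ T) z :=
      (T_contDiffAt hz).fderiv_right (by norm_num)
    rw [hDf]
    exact h2.continuousAt


theorem T_difference_quotient_tendsto_uniformly
    (φ dφ : ℂ → ℂ) (hφm : Measurable φ) (hdφm : Measurable dφ)
    (Cφ : ℝ) (hφ : ∀ z, ‖φ z‖ ≤ Cφ)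
    (Cdφ : ℝ) (hdφ : ∀ z, ‖dφ z‖ ≤ Cdφ)
    (D : ℂ → (ℂ →L[ℝ] ℂ)) (hD : ∀ z : ℂ, HasFDerivAt T (D z) z) :
    TendstoUniformly
      (fun (ε : ℝ) (z : ℂ) => (T (φ z + (ε : ℂ) * dφ z) - T (φ z)) / (ε : ℂ))
      (fun z => D (φ z) (dφ z))
      (nhdsWithin (0 : ℝ) {0}ᶜ) := by
  have hCφ0 : 0 ≤ Cφ := le_trans (norm_nonneg _) (hφ 0)
  have hCdφ0 : 0 ≤ Cdφ := le_trans (norm_nonneg _) (hdφ 0)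
  have hDcont := D_continuous D hD
  set K : Set ℂ := Metric.closedBall 0 (Cφ + Cdφ) with hK
  have hUC := (isCompact_closedBall (0:ℂ) (Cφ + Cdφ)).uniformContinuousOn_of_continuous
    hDcont.continuousOn
  rw [Metric.tendstoUniformly_iff]
  intro δ hδ
  set δ' := δ / (2 * (Cdφ + 1)) with hδ'
  have hδ'pos : 0 < δ' := by positivity
  obtain ⟨η, hηpos, hmod⟩ := Metric.uniformContinuousOn_iff.mp hUC δ' hδ'pos
  set r := min (η / (Cdφ + 1)) 1 with hr
  have hrpos : 0 < r := by positivity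
  have h1 : ∀ᶠ ε : ℝ in nhds 0, |ε| < r := by
    filter_upwards [Metric.ball_mem_nhds (0:ℝ) hrpos] with ε hε
    simpa [Real.dist_eq] using hε
  filter_upwards [eventually_nhdsWithin_of_eventually_nhds h1, self_mem_nhdsWithin]
    with ε hεr hε0
  intro z
  have hε0' : ε ≠ 0 := hε0
  have hεne : (ε:ℂ) ≠ 0 := Complex.ofReal_ne_zero.mpr hε0'
  have hεabs : 0 < |ε| := abs_pos.mpr hε0'
  set a := φ z with ha
  set v := dφ z with hv
  set w := (ε:ℂ) * v with hw
  have hva : ‖v‖ ≤ Cdφ := by exact hdφ z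
  have haC : ‖a‖ ≤ Cφ := by exact hφ z
  have hεnorm : ‖(ε:ℂ)‖ = |ε| := by rw [Complex.norm_real, Real.norm_eq_abs]
  have hwn : ‖w‖ ≤ |ε| * Cdφ := by
    rw [hw, norm_mul, hεnorm]
    exact mul_le_mul_of_nonneg_left hva (abs_nonneg ε)
  have hεr1 : |ε| ≤ 1 := le_of_lt (lt_of_lt_of_le hεr (min_le_right _ _))
  have hεrη : |ε| < η / (Cdφ + 1) := lt_of_lt_of_le hεr (min_le_left _ _)
  have hwη : ‖w‖ < η := by
    have : |ε| * Cdφ < η := by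
      have h2 : |ε| * Cdφ ≤ |ε| * (Cdφ + 1) := by nlinarith
      have h3 : |ε| * (Cdφ + 1) < η := (lt_div_iff₀ (by positivity)).mp hεrη
      linarith
    linarith
  have hw1 : ‖w‖ ≤ Cdφ := le_trans hwn (by nlinarith)
  have haK : a ∈ K := by
    rw [hK, Metric.mem_closedBall, dist_zero_right]; linarith
  have hawK : a + w ∈ K := by
    rw [hK, Metric.mem_closedBall, dist_zero_right]
    calc ‖a + w‖ ≤ ‖a‖ + ‖w‖ := norm_add_le a w
      _ ≤ Cφ + Cdφ := add_le_add haC hw1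
  set s := segment ℝ a (a + w) with hs
  have hsub : s ⊆ K := (convex_closedBall (0:ℂ) (Cφ + Cdφ)).segment_subset haK hawK
  have hder : ∀ y ∈ s, HasFDerivWithinAt (fun y => T y - D a y) (D y - D a) s y :=
    fun y _ => ((hD y).sub ((D a).hasFDerivAt)).hasFDerivWithinAt
  have hbd : ∀ y ∈ s, ‖D y - D a‖ ≤ δ' := by
    intro y hy
    have hyK := hsub hy
    have hya : dist y a < η := by
      obtain ⟨p, q, hp, hq, hpq, hy'⟩ := hy
      have : y - a = q • w := by
        rw [← hy']; rw [smul_add]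
        have hsum : p • a + (q • a + q • w) - a = (p + q) • a - a + q • w := by module
        rw [hsum, hpq, one_smul, sub_self, zero_add]
      rw [dist_eq_norm, this, norm_smul, Real.norm_of_nonneg hq]
      calc q * ‖w‖ ≤ 1 * ‖w‖ := by
            have hq1 : q ≤ 1 := by linarith
            nlinarith [norm_nonneg w]
        _ < η := by rw [one_mul]; exact hwη
    have := hmod y hyK a haK hya
    rw [dist_eq_norm] at this
    exact this.le
  have hmvt := (convex_segment a (a + w)).norm_image_sub_le_of_norm_hasFDerivWithin_le
    hder hbd (left_mem_segment ℝ a (a + w)) (right_mem_segment ℝ a (a + w))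
  have hsimp : (fun y => T y - D a y) (a + w) - (fun y => T y - D a y) a
      = T (a + w) - T a - D a w := by
    simp only [map_add]
    ring
  rw [hsimp, add_sub_cancel_left] at hmvt
  -- now convert to the difference quotient
  have hDaw : D a w = (ε:ℂ) * D a v := by
    rw [hw, ← Complex.real_smul, map_smul, Complex.real_smul]
  have hq : (T (a + w) - T a) / (ε:ℂ) - D a v = (ε:ℂ)⁻¹ * (T (a + w) - T a - D a w) := by
    rw [hDaw]
    field_simp
  have : dist (D a v) ((T (a + w) - T a) / (ε:ℂ)) = ‖(ε:ℂ)⁻¹ * (T (a + w) - T a - D a w)‖ := by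
    rw [dist_eq_norm, norm_sub_rev, ← hq]
  rw [this, norm_mul, norm_inv, hεnorm]
  calc |ε|⁻¹ * ‖T (a + w) - T a - D a w‖ ≤ |ε|⁻¹ * (δ' * ‖w‖) := by
        gcongr
    _ ≤ |ε|⁻¹ * (δ' * (|ε| * Cdφ)) := by gcongr
    _ = δ' * Cdφ := by field_simp
    _ < δ := by
        rw [hδ']
        rw [div_mul_eq_mul_div, div_lt_iff₀ (by positivity)]
        nlinarith
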